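/- arXiv:1703.04302 — 2 statements merged into one kernel-verified Lean document; each statement's English description precedes it below -/
import Mathlib

section
/- For the bi-infinite periodic sequence A = \overline{2,1,1,2,2,2,1} ∈ {1,2}^ℤ (period 7, with a position j₀ where A_{j₀} = 2 is followed by 1,1,2,2,2,1), one has λ_{j₀}(A) = sup_{j∈ℤ} λ_j(A), i.e., the supremum of λ_j over all positions is attained at the position of the digit 2 preceding 1,1,2,2,2. -/
open Filter Topology

/-- Value of a finite continued fraction `[a₀; a₁, …, aₙ]` with natural-number entries
(the empty list has value 0, and a trailing `1/0 = 0` convention makes the recursion correct). -/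
noncomputable def cfList : List ℕ → ℝ
  | [] => 0
  | a :: l => (a : ℝ) + 1 / cfList l

/-- `n`-th convergent `[a 0; a 1, …, a n]` of the infinite continued fraction with entries `a`. -/
noncomputable def cfConvs (a : ℕ → ℕ) (n : ℕ) : ℝ :=
  cfList ((List.range (n + 1)).map a)

/-- `CFLim a x` : the infinite continued fraction `[a 0; a 1, a 2, …]` converges to `x`. -/
def CFLim (a : ℕ → ℕ) (x : ℝ) : Prop :=
  Tendsto (cfConvs a) atTop (nhds x)

/-- The eventually periodic sequence of partial quotients with preperiod `pre` and period `per`. -/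
def epseq (pre per : List ℕ) : ℕ → ℕ :=
  fun n => if n < pre.length then pre.getD n 0 else per.getD ((n - pre.length) % per.length) 0

/-- `IsLambda B j v` : for the bi-infinite sequence `B`,
`v = λ_j(B) = [B j; B (j+1), …] + [0; B (j-1), B (j-2), …]`. -/
def IsLambda (B : ℤ → ℕ) (j : ℤ) (v : ℝ) : Prop :=
  ∃ x y : ℝ,
    CFLim (fun n => B (j + n)) x ∧
    CFLim (fun n => if n = 0 then 0 else B (j - n)) y ∧
    v = x + y

/-- The bi-infinite periodic sequence `\overline{2,1,1,2,2,2,1}` (period 7),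
positioned so that the digit at index 0 is the `2` followed by `1,1,2,2,2,1`. -/
def Aper : ℤ → ℕ := fun n => [2,1,1,2,2,2,1].getD (n % 7).toNat 0

lemma cfList_cons (a : ℕ) (l : List ℕ) : cfList (a :: l) = (a : ℝ) + 1 / cfList l := rfl

lemma cfList_nonneg : ∀ l : List ℕ, 0 ≤ cfList l
  | [] => le_refl 0
  | a :: l => by
      rw [cfList_cons]
      have h := cfList_nonneg l
      have : 0 ≤ 1 / cfList l := by positivity
      positivity

lemma one_le_cfList (a : ℕ) (l : List ℕ) (ha : 1 ≤ a) : 1 ≤ cfList (a :: l) := by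
  rw [cfList_cons]
  have h1 : (1:ℝ) ≤ a := by exact_mod_cast ha
  have : 0 ≤ 1 / cfList l := by have := cfList_nonneg l; positivity
  linarith

lemma cfConvs_succ (a : ℕ → ℕ) (n : ℕ) :
    cfConvs a (n+1) = (a 0 : ℝ) + 1 / cfConvs (fun k => a (k+1)) n := by
  unfold cfConvs
  rw [List.range_succ_eq_map, List.map_cons, cfList_cons, List.map_map]
  rfl

lemma one_le_cfConvs (a : ℕ → ℕ) (h : 1 ≤ a 0) (n : ℕ) : 1 ≤ cfConvs a n := by
  unfold cfConvs
  rw [List.range_succ_eq_map, List.map_cons]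
  exact one_le_cfList _ _ h

lemma cfConvs_le (a : ℕ → ℕ) (h : ∀ n, 1 ≤ a n) (n : ℕ) : cfConvs a n ≤ (a 0 : ℝ) + 1 := by
  cases n with
  | zero =>
      show cfList [a 0] ≤ _
      rw [cfList_cons]
      norm_num [cfList]
  | succ n =>
      rw [cfConvs_succ]
      have h1 : 1 ≤ cfConvs (fun k => a (k+1)) n := one_le_cfConvs _ (h 1) n
      have : 1 / cfConvs (fun k => a (k+1)) n ≤ 1 := by
        rw [div_le_one (by linarith)]; linarith
      linarith

lemma cfConvs_shift (a : ℕ → ℕ) (k m : ℕ) :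
    cfConvs (fun i => a (k + i)) (m+1)
      = (a k : ℝ) + 1 / cfConvs (fun i => a (k + 1 + i)) m := by
  rw [cfConvs_succ]
  have h1 : (fun i => a (k + (i + 1))) = (fun i => a (k + 1 + i)) := by
    funext i; congr 1; omega
  rw [show k + 0 = k from rfl, h1]

lemma master (a : ℕ → ℕ) (x : ℝ) (hpos : ∀ n, 1 ≤ a n)
    (hper : ∀ n, a (n + 7) = a n)
    (p q r s : ℝ) (hr : 0 < r) (hq : 0 < q) (hs : 0 ≤ s)
    (hrel : ∀ t : ℝ, 1 ≤ t →
      (a 0 : ℝ) + 1/((a 1 : ℝ) + 1/((a 2 : ℝ) + 1/((a 3 : ℝ) + 1/((a 4 : ℝ) +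
        1/((a 5 : ℝ) + 1/((a 6 : ℝ) + 1/t)))))) = (p*t+q)/(r*t+s))
    (hx : Tendsto (cfConvs a) atTop (nhds x)) :
    x = ((p - s) + Real.sqrt ((p-s)^2 + 4*q*r)) / (2*r) := by
  have hA0 : (fun i => a (0 + i)) = a := by funext i; rw [Nat.zero_add]
  have hA7 : (fun i => a (7 + i)) = a := by
    funext i; rw [Nat.add_comm]; exact hper i
  have hcn : ∀ n, 1 ≤ cfConvs a n := one_le_cfConvs a (hpos 0)
  have key : ∀ n, cfConvs a (n + 7) =
      (p * cfConvs a n + q) / (r * cfConvs a n + s) := by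
    intro n
    have e0 : cfConvs a (n+7) = cfConvs (fun i => a (0 + i)) (n+6+1) := by rw [hA0]
    rw [e0, cfConvs_shift, show (0:ℕ)+1 = 1 from rfl,
      show n+6 = n+5+1 from rfl, cfConvs_shift, show (1:ℕ)+1 = 2 from rfl,
      show n+5 = n+4+1 from rfl, cfConvs_shift, show (2:ℕ)+1 = 3 from rfl,
      show n+4 = n+3+1 from rfl, cfConvs_shift, show (3:ℕ)+1 = 4 from rfl,
      show n+3 = n+2+1 from rfl, cfConvs_shift, show (4:ℕ)+1 = 5 from rfl,
      show n+2 = n+1+1 from rfl, cfConvs_shift, show (5:ℕ)+1 = 6 from rfl,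
      show n+1 = n+0+1 from rfl, cfConvs_shift, show (6:ℕ)+1 = 7 from rfl,
      hA7]
    exact hrel _ (hcn n)
  have hx1 : 1 ≤ x := ge_of_tendsto' hx hcn
  have hden : r * x + s ≠ 0 := by nlinarith
  have hlim1 : Tendsto (fun n => cfConvs a (n + 7)) atTop (nhds x) :=
    hx.comp (tendsto_add_atTop_nat 7)
  have hlim2 : Tendsto (fun n => (p * cfConvs a n + q) / (r * cfConvs a n + s))
      atTop (nhds ((p * x + q) / (r * x + s))) := by
    apply Tendsto.div
    · exact (hx.const_mul p).add tendsto_const_nhds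
    · exact (hx.const_mul r).add tendsto_const_nhds
    · exact hden
  have heq : x = (p * x + q) / (r * x + s) := by
    apply tendsto_nhds_unique hlim1
    simpa only [key] using hlim2
  have hquad : r * x^2 + (s - p) * x - q = 0 := by
    have := heq
    field_simp at this
    nlinarith [this]
  set D := (p - s)^2 + 4*q*r with hD
  have hDpos : 0 < D := by positivity
  have hs1 : Real.sqrt D ^ 2 = D := Real.sq_sqrt hDpos.le
  have hpos2 : 0 < 2*r*x - (p - s) := by nlinarith
  have h2 : (2*r*x - (p - s))^2 = D := by nlinarith
  have h3 : Real.sqrt D = 2*r*x - (p - s) := by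
    rw [← h2]; exact Real.sqrt_sq hpos2.le
  rw [h3]; field_simp; ring

lemma masterY (b : ℕ → ℕ) (y : ℝ) (hb0 : b 0 = 0)
    (hpos : ∀ n, 1 ≤ b (n + 1))
    (hper : ∀ n, b (n + 1 + 7) = b (n + 1))
    (p q r s : ℝ) (hr : 0 < r) (hq : 0 < q) (hs : 0 ≤ s)
    (hrel : ∀ t : ℝ, 1 ≤ t →
      (b 1 : ℝ) + 1/((b 2 : ℝ) + 1/((b 3 : ℝ) + 1/((b 4 : ℝ) + 1/((b 5 : ℝ) +
        1/((b 6 : ℝ) + 1/((b 7 : ℝ) + 1/t)))))) = (p*t+q)/(r*t+s))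
    (hy : Tendsto (cfConvs b) atTop (nhds y)) :
    y = (2*r) / ((p - s) + Real.sqrt ((p-s)^2 + 4*q*r)) := by
  set a : ℕ → ℕ := fun n => b (n + 1) with ha
  have hstep : ∀ n, cfConvs b (n + 1) = 1 / cfConvs a n := by
    intro n
    rw [cfConvs_succ, hb0]
    norm_num
    rfl
  have hage : ∀ n, 1 ≤ cfConvs a n := one_le_cfConvs a (hpos 0)
  have hale : ∀ n, cfConvs a n ≤ (a 0 : ℝ) + 1 := cfConvs_le a hpos
  have hy1 : Tendsto (fun n => cfConvs b (n + 1)) atTop (nhds y) :=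
    hy.comp (tendsto_add_atTop_nat 1)
  have hy0 : 0 < y := by
    have hb : ∀ n, 1/((a 0 : ℝ) + 1) ≤ cfConvs b (n + 1) := by
      intro n
      rw [hstep]
      apply one_div_le_one_div_of_le
      · linarith [hage n]
      · exact hale n
    have := ge_of_tendsto' hy1 hb
    have h0 : (0:ℝ) < 1/((a 0 : ℝ) + 1) := by positivity
    linarith
  have hy2 : Tendsto (fun n => (cfConvs a n)⁻¹) atTop (nhds y) := by
    simpa only [hstep, one_div] using hy1
  have hy3 : Tendsto (cfConvs a) atTop (nhds y⁻¹) := by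
    have := hy2.inv₀ hy0.ne'
    simpa only [inv_inv] using this
  have hres := master a y⁻¹ hpos (fun n => hper n) p q r s hr hq hs hrel hy3
  rw [← inv_inv y, hres, inv_div]

def rotA (c : ℕ) (n : ℕ) : ℕ := [2,1,1,2,2,2,1].getD ((c + n) % 7) 0

def rotB (c : ℕ) (n : ℕ) : ℕ := if n = 0 then 0 else [2,1,1,2,2,2,1].getD ((c + 6 * n) % 7) 0

lemma getD7_pos (m : ℕ) (h : m < 7) : 1 ≤ [2,1,1,2,2,2,1].getD m 0 := by
  interval_cases m <;> decide

lemma rotA_pos (c : ℕ) : ∀ n, 1 ≤ rotA c n :=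
  fun _ => getD7_pos _ (Nat.mod_lt _ (by norm_num))

lemma rotA_per (c : ℕ) : ∀ n, rotA c (n + 7) = rotA c n := by
  intro n
  show [2,1,1,2,2,2,1].getD ((c + (n + 7)) % 7) 0 = [2,1,1,2,2,2,1].getD ((c + n) % 7) 0
  rw [show (c + (n + 7)) % 7 = (c + n) % 7 from by omega]

lemma rotB_zero (c : ℕ) : rotB c 0 = 0 := rfl

lemma rotB_pos (c : ℕ) : ∀ n, 1 ≤ rotB c (n + 1) := by
  intro n
  show 1 ≤ if n + 1 = 0 then 0 else [2,1,1,2,2,2,1].getD ((c + 6 * (n+1)) % 7) 0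
  rw [if_neg (Nat.succ_ne_zero n)]
  exact getD7_pos _ (Nat.mod_lt _ (by norm_num))

lemma rotB_per (c : ℕ) : ∀ n, rotB c (n + 1 + 7) = rotB c (n + 1) := by
  intro n
  show (if n + 1 + 7 = 0 then 0 else [2,1,1,2,2,2,1].getD ((c + 6 * (n+1+7)) % 7) 0)
      = if n + 1 = 0 then 0 else [2,1,1,2,2,2,1].getD ((c + 6 * (n+1)) % 7) 0
  rw [if_neg (by omega), if_neg (Nat.succ_ne_zero n),
    show (c + 6 * (n+1+7)) % 7 = (c + 6 * (n+1)) % 7 from by omega]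

lemma Aper_rotA (j : ℤ) (c : ℕ) (hc : j % 7 = (c : ℤ)) :
    (fun n : ℕ => Aper (j + ↑n)) = rotA c := by
  funext n
  show [2,1,1,2,2,2,1].getD ((j + ↑n) % 7).toNat 0 = [2,1,1,2,2,2,1].getD ((c + n) % 7) 0
  have h : ((j + (n:ℤ)) % 7).toNat = (c + n) % 7 := by omega
  rw [h]

lemma Aper_rotB (j : ℤ) (c : ℕ) (hc : j % 7 = (c : ℤ)) :
    (fun n : ℕ => if n = 0 then 0 else Aper (j - ↑n)) = rotB c := by
  funext n
  cases n with
  | zero => rfl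
  | succ m =>
      show Aper (j - ↑(m+1)) = if m + 1 = 0 then 0 else [2,1,1,2,2,2,1].getD ((c + 6 * (m+1)) % 7) 0
      rw [if_neg (Nat.succ_ne_zero m)]
      show [2,1,1,2,2,2,1].getD ((j - ↑(m+1):ℤ) % 7).toNat 0 = _
      have h : ((j - ↑(m+1):ℤ) % 7).toNat = (c + 6 * (m+1)) % 7 := by
        push_cast; omega
      rw [h]

lemma lamVal0 (j : ℤ) (hc : j % 7 = 0) (w : ℝ) (hw : IsLambda Aper j w) :
    w = Real.sqrt 18229 / 41 := by
  obtain ⟨x, y, hx, hy, hxy⟩ := hw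
  rw [Aper_rotA j 0 (by omega)] at hx
  rw [Aper_rotB j 0 (by omega)] at hy
  have hxval : x = ((106 - 29 : ℝ) + Real.sqrt ((106-29:ℝ)^2 + 4*75*41)) / (2*41) := by
    apply master (rotA 0) x (rotA_pos 0) (rotA_per 0) 106 75 41 29
        (by norm_num) (by norm_num) (by norm_num) ?_ hx
    intro t ht
    rw [show rotA 0 0 = 2 from by decide, show rotA 0 1 = 1 from by decide, show rotA 0 2 = 1 from by decide, show rotA 0 3 = 2 from by decide, show rotA 0 4 = 2 from by decide, show rotA 0 5 = 2 from by decide, show rotA 0 6 = 1 from by decide]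
    push_cast
    have p0 : (0:ℝ) < t := by linarith
    have p1 : (0:ℝ) < 1 + 1/t := by have := one_div_pos.mpr p0; linarith
    have p2 : (0:ℝ) < 2 + 1/(1 + 1/t) := by have := one_div_pos.mpr p1; linarith
    have p3 : (0:ℝ) < 2 + 1/(2 + 1/(1 + 1/t)) := by have := one_div_pos.mpr p2; linarith
    have p4 : (0:ℝ) < 2 + 1/(2 + 1/(2 + 1/(1 + 1/t))) := by have := one_div_pos.mpr p3; linarith
    have p5 : (0:ℝ) < 1 + 1/(2 + 1/(2 + 1/(2 + 1/(1 + 1/t)))) := by have := one_div_pos.mpr p4; linarith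
    have p6 : (0:ℝ) < 1 + 1/(1 + 1/(2 + 1/(2 + 1/(2 + 1/(1 + 1/t))))) := by have := one_div_pos.mpr p5; linarith
    have pd : (0:ℝ) < 41*t + 29 := by linarith
    field_simp
    ring
  have hyval : y = (2*75 : ℝ) / ((106 - 29 : ℝ) + Real.sqrt ((106-29:ℝ)^2 + 4*41*75)) := by
    apply masterY (rotB 0) y (rotB_zero 0) (rotB_pos 0) (rotB_per 0) 106 41 75 29
        (by norm_num) (by norm_num) (by norm_num) ?_ hy
    intro t ht
    rw [show rotB 0 1 = 1 from by decide, show rotB 0 2 = 2 from by decide, show rotB 0 3 = 2 from by decide, show rotB 0 4 = 2 from by decide, show rotB 0 5 = 1 from by decide, show rotB 0 6 = 1 from by decide, show rotB 0 7 = 2 from by decide]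
    push_cast
    have p0 : (0:ℝ) < t := by linarith
    have p1 : (0:ℝ) < 2 + 1/t := by have := one_div_pos.mpr p0; linarith
    have p2 : (0:ℝ) < 1 + 1/(2 + 1/t) := by have := one_div_pos.mpr p1; linarith
    have p3 : (0:ℝ) < 1 + 1/(1 + 1/(2 + 1/t)) := by have := one_div_pos.mpr p2; linarith
    have p4 : (0:ℝ) < 2 + 1/(1 + 1/(1 + 1/(2 + 1/t))) := by have := one_div_pos.mpr p3; linarith
    have p5 : (0:ℝ) < 2 + 1/(2 + 1/(1 + 1/(1 + 1/(2 + 1/t)))) := by have := one_div_pos.mpr p4; linarith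
    have p6 : (0:ℝ) < 2 + 1/(2 + 1/(2 + 1/(1 + 1/(1 + 1/(2 + 1/t))))) := by have := one_div_pos.mpr p5; linarith
    have pd : (0:ℝ) < 75*t + 29 := by linarith
    field_simp
    ring
  rw [hxy, hxval, hyval,
    show ((106-29:ℝ)^2 + 4*75*41) = 18229 by norm_num,
    show ((106-29:ℝ)^2 + 4*41*75) = 18229 by norm_num]
  have hS2 : Real.sqrt 18229 ^ 2 = 18229 := Real.sq_sqrt (by norm_num)
  have hSpos : (0:ℝ) < Real.sqrt 18229 := Real.sqrt_pos.mpr (by norm_num)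
  have hden : (106 - 29 : ℝ) + Real.sqrt 18229 ≠ 0 := by linarith
  field_simp
  nlinarith [hS2]

lemma lamVal1 (j : ℤ) (hc : j % 7 = 1) (w : ℝ) (hw : IsLambda Aper j w) :
    w = Real.sqrt 18229 / 65 := by
  obtain ⟨x, y, hx, hy, hxy⟩ := hw
  rw [Aper_rotA j 1 (by omega)] at hx
  rw [Aper_rotB j 1 (by omega)] at hy
  have hxval : x = ((111 - 24 : ℝ) + Real.sqrt ((111-24:ℝ)^2 + 4*41*65)) / (2*65) := by
    apply master (rotA 1) x (rotA_pos 1) (rotA_per 1) 111 41 65 24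
        (by norm_num) (by norm_num) (by norm_num) ?_ hx
    intro t ht
    rw [show rotA 1 0 = 1 from by decide, show rotA 1 1 = 1 from by decide, show rotA 1 2 = 2 from by decide, show rotA 1 3 = 2 from by decide, show rotA 1 4 = 2 from by decide, show rotA 1 5 = 1 from by decide, show rotA 1 6 = 2 from by decide]
    push_cast
    have p0 : (0:ℝ) < t := by linarith
    have p1 : (0:ℝ) < 2 + 1/t := by have := one_div_pos.mpr p0; linarith
    have p2 : (0:ℝ) < 1 + 1/(2 + 1/t) := by have := one_div_pos.mpr p1; linarith
    have p3 : (0:ℝ) < 2 + 1/(1 + 1/(2 + 1/t)) := by have := one_div_pos.mpr p2; linarith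
    have p4 : (0:ℝ) < 2 + 1/(2 + 1/(1 + 1/(2 + 1/t))) := by have := one_div_pos.mpr p3; linarith
    have p5 : (0:ℝ) < 2 + 1/(2 + 1/(2 + 1/(1 + 1/(2 + 1/t)))) := by have := one_div_pos.mpr p4; linarith
    have p6 : (0:ℝ) < 1 + 1/(2 + 1/(2 + 1/(2 + 1/(1 + 1/(2 + 1/t))))) := by have := one_div_pos.mpr p5; linarith
    have pd : (0:ℝ) < 65*t + 24 := by linarith
    field_simp
    ring
  have hyval : y = (2*41 : ℝ) / ((111 - 24 : ℝ) + Real.sqrt ((111-24:ℝ)^2 + 4*65*41)) := by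
    apply masterY (rotB 1) y (rotB_zero 1) (rotB_pos 1) (rotB_per 1) 111 65 41 24
        (by norm_num) (by norm_num) (by norm_num) ?_ hy
    intro t ht
    rw [show rotB 1 1 = 2 from by decide, show rotB 1 2 = 1 from by decide, show rotB 1 3 = 2 from by decide, show rotB 1 4 = 2 from by decide, show rotB 1 5 = 2 from by decide, show rotB 1 6 = 1 from by decide, show rotB 1 7 = 1 from by decide]
    push_cast
    have p0 : (0:ℝ) < t := by linarith
    have p1 : (0:ℝ) < 1 + 1/t := by have := one_div_pos.mpr p0; linarith
    have p2 : (0:ℝ) < 1 + 1/(1 + 1/t) := by have := one_div_pos.mpr p1; linarith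
    have p3 : (0:ℝ) < 2 + 1/(1 + 1/(1 + 1/t)) := by have := one_div_pos.mpr p2; linarith
    have p4 : (0:ℝ) < 2 + 1/(2 + 1/(1 + 1/(1 + 1/t))) := by have := one_div_pos.mpr p3; linarith
    have p5 : (0:ℝ) < 2 + 1/(2 + 1/(2 + 1/(1 + 1/(1 + 1/t)))) := by have := one_div_pos.mpr p4; linarith
    have p6 : (0:ℝ) < 1 + 1/(2 + 1/(2 + 1/(2 + 1/(1 + 1/(1 + 1/t))))) := by have := one_div_pos.mpr p5; linarith
    have pd : (0:ℝ) < 41*t + 24 := by linarith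
    field_simp
    ring
  rw [hxy, hxval, hyval,
    show ((111-24:ℝ)^2 + 4*41*65) = 18229 by norm_num,
    show ((111-24:ℝ)^2 + 4*65*41) = 18229 by norm_num]
  have hS2 : Real.sqrt 18229 ^ 2 = 18229 := Real.sq_sqrt (by norm_num)
  have hSpos : (0:ℝ) < Real.sqrt 18229 := Real.sqrt_pos.mpr (by norm_num)
  have hden : (111 - 24 : ℝ) + Real.sqrt 18229 ≠ 0 := by linarith
  field_simp
  nlinarith [hS2]

lemma lamVal2 (j : ℤ) (hc : j % 7 = 2) (w : ℝ) (hw : IsLambda Aper j w) :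
    w = Real.sqrt 18229 / 63 := by
  obtain ⟨x, y, hx, hy, hxy⟩ := hw
  rw [Aper_rotA j 2 (by omega)] at hx
  rw [Aper_rotB j 2 (by omega)] at hy
  have hxval : x = ((89 - 46 : ℝ) + Real.sqrt ((89-46:ℝ)^2 + 4*65*63)) / (2*63) := by
    apply master (rotA 2) x (rotA_pos 2) (rotA_per 2) 89 65 63 46
        (by norm_num) (by norm_num) (by norm_num) ?_ hx
    intro t ht
    rw [show rotA 2 0 = 1 from by decide, show rotA 2 1 = 2 from by decide, show rotA 2 2 = 2 from by decide, show rotA 2 3 = 2 from by decide, show rotA 2 4 = 1 from by decide, show rotA 2 5 = 2 from by decide, show rotA 2 6 = 1 from by decide]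
    push_cast
    have p0 : (0:ℝ) < t := by linarith
    have p1 : (0:ℝ) < 1 + 1/t := by have := one_div_pos.mpr p0; linarith
    have p2 : (0:ℝ) < 2 + 1/(1 + 1/t) := by have := one_div_pos.mpr p1; linarith
    have p3 : (0:ℝ) < 1 + 1/(2 + 1/(1 + 1/t)) := by have := one_div_pos.mpr p2; linarith
    have p4 : (0:ℝ) < 2 + 1/(1 + 1/(2 + 1/(1 + 1/t))) := by have := one_div_pos.mpr p3; linarith
    have p5 : (0:ℝ) < 2 + 1/(2 + 1/(1 + 1/(2 + 1/(1 + 1/t)))) := by have := one_div_pos.mpr p4; linarith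
    have p6 : (0:ℝ) < 2 + 1/(2 + 1/(2 + 1/(1 + 1/(2 + 1/(1 + 1/t))))) := by have := one_div_pos.mpr p5; linarith
    have pd : (0:ℝ) < 63*t + 46 := by linarith
    field_simp
    ring
  have hyval : y = (2*65 : ℝ) / ((89 - 46 : ℝ) + Real.sqrt ((89-46:ℝ)^2 + 4*63*65)) := by
    apply masterY (rotB 2) y (rotB_zero 2) (rotB_pos 2) (rotB_per 2) 89 63 65 46
        (by norm_num) (by norm_num) (by norm_num) ?_ hy
    intro t ht
    rw [show rotB 2 1 = 1 from by decide, show rotB 2 2 = 2 from by decide, show rotB 2 3 = 1 from by decide, show rotB 2 4 = 2 from by decide, show rotB 2 5 = 2 from by decide, show rotB 2 6 = 2 from by decide, show rotB 2 7 = 1 from by decide]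
    push_cast
    have p0 : (0:ℝ) < t := by linarith
    have p1 : (0:ℝ) < 1 + 1/t := by have := one_div_pos.mpr p0; linarith
    have p2 : (0:ℝ) < 2 + 1/(1 + 1/t) := by have := one_div_pos.mpr p1; linarith
    have p3 : (0:ℝ) < 2 + 1/(2 + 1/(1 + 1/t)) := by have := one_div_pos.mpr p2; linarith
    have p4 : (0:ℝ) < 2 + 1/(2 + 1/(2 + 1/(1 + 1/t))) := by have := one_div_pos.mpr p3; linarith
    have p5 : (0:ℝ) < 1 + 1/(2 + 1/(2 + 1/(2 + 1/(1 + 1/t)))) := by have := one_div_pos.mpr p4; linarith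
    have p6 : (0:ℝ) < 2 + 1/(1 + 1/(2 + 1/(2 + 1/(2 + 1/(1 + 1/t))))) := by have := one_div_pos.mpr p5; linarith
    have pd : (0:ℝ) < 65*t + 46 := by linarith
    field_simp
    ring
  rw [hxy, hxval, hyval,
    show ((89-46:ℝ)^2 + 4*65*63) = 18229 by norm_num,
    show ((89-46:ℝ)^2 + 4*63*65) = 18229 by norm_num]
  have hS2 : Real.sqrt 18229 ^ 2 = 18229 := Real.sq_sqrt (by norm_num)
  have hSpos : (0:ℝ) < Real.sqrt 18229 := Real.sqrt_pos.mpr (by norm_num)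
  have hden : (89 - 46 : ℝ) + Real.sqrt 18229 ≠ 0 := by linarith
  field_simp
  nlinarith [hS2]

lemma lamVal3 (j : ℤ) (hc : j % 7 = 3) (w : ℝ) (hw : IsLambda Aper j w) :
    w = Real.sqrt 18229 / 45 := by
  obtain ⟨x, y, hx, hy, hxy⟩ := hw
  rw [Aper_rotA j 3 (by omega)] at hx
  rw [Aper_rotB j 3 (by omega)] at hy
  have hxval : x = ((109 - 26 : ℝ) + Real.sqrt ((109-26:ℝ)^2 + 4*63*45)) / (2*45) := by
    apply master (rotA 3) x (rotA_pos 3) (rotA_per 3) 109 63 45 26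
        (by norm_num) (by norm_num) (by norm_num) ?_ hx
    intro t ht
    rw [show rotA 3 0 = 2 from by decide, show rotA 3 1 = 2 from by decide, show rotA 3 2 = 2 from by decide, show rotA 3 3 = 1 from by decide, show rotA 3 4 = 2 from by decide, show rotA 3 5 = 1 from by decide, show rotA 3 6 = 1 from by decide]
    push_cast
    have p0 : (0:ℝ) < t := by linarith
    have p1 : (0:ℝ) < 1 + 1/t := by have := one_div_pos.mpr p0; linarith
    have p2 : (0:ℝ) < 1 + 1/(1 + 1/t) := by have := one_div_pos.mpr p1; linarith
    have p3 : (0:ℝ) < 2 + 1/(1 + 1/(1 + 1/t)) := by have := one_div_pos.mpr p2; linarith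
    have p4 : (0:ℝ) < 1 + 1/(2 + 1/(1 + 1/(1 + 1/t))) := by have := one_div_pos.mpr p3; linarith
    have p5 : (0:ℝ) < 2 + 1/(1 + 1/(2 + 1/(1 + 1/(1 + 1/t)))) := by have := one_div_pos.mpr p4; linarith
    have p6 : (0:ℝ) < 2 + 1/(2 + 1/(1 + 1/(2 + 1/(1 + 1/(1 + 1/t))))) := by have := one_div_pos.mpr p5; linarith
    have pd : (0:ℝ) < 45*t + 26 := by linarith
    field_simp
    ring
  have hyval : y = (2*63 : ℝ) / ((109 - 26 : ℝ) + Real.sqrt ((109-26:ℝ)^2 + 4*45*63)) := by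
    apply masterY (rotB 3) y (rotB_zero 3) (rotB_pos 3) (rotB_per 3) 109 45 63 26
        (by norm_num) (by norm_num) (by norm_num) ?_ hy
    intro t ht
    rw [show rotB 3 1 = 1 from by decide, show rotB 3 2 = 1 from by decide, show rotB 3 3 = 2 from by decide, show rotB 3 4 = 1 from by decide, show rotB 3 5 = 2 from by decide, show rotB 3 6 = 2 from by decide, show rotB 3 7 = 2 from by decide]
    push_cast
    have p0 : (0:ℝ) < t := by linarith
    have p1 : (0:ℝ) < 2 + 1/t := by have := one_div_pos.mpr p0; linarith
    have p2 : (0:ℝ) < 2 + 1/(2 + 1/t) := by have := one_div_pos.mpr p1; linarith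
    have p3 : (0:ℝ) < 2 + 1/(2 + 1/(2 + 1/t)) := by have := one_div_pos.mpr p2; linarith
    have p4 : (0:ℝ) < 1 + 1/(2 + 1/(2 + 1/(2 + 1/t))) := by have := one_div_pos.mpr p3; linarith
    have p5 : (0:ℝ) < 2 + 1/(1 + 1/(2 + 1/(2 + 1/(2 + 1/t)))) := by have := one_div_pos.mpr p4; linarith
    have p6 : (0:ℝ) < 1 + 1/(2 + 1/(1 + 1/(2 + 1/(2 + 1/(2 + 1/t))))) := by have := one_div_pos.mpr p5; linarith
    have pd : (0:ℝ) < 63*t + 26 := by linarith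
    field_simp
    ring
  rw [hxy, hxval, hyval,
    show ((109-26:ℝ)^2 + 4*63*45) = 18229 by norm_num,
    show ((109-26:ℝ)^2 + 4*45*63) = 18229 by norm_num]
  have hS2 : Real.sqrt 18229 ^ 2 = 18229 := Real.sq_sqrt (by norm_num)
  have hSpos : (0:ℝ) < Real.sqrt 18229 := Real.sqrt_pos.mpr (by norm_num)
  have hden : (109 - 26 : ℝ) + Real.sqrt 18229 ≠ 0 := by linarith
  field_simp
  nlinarith [hS2]

lemma lamVal4 (j : ℤ) (hc : j % 7 = 4) (w : ℝ) (hw : IsLambda Aper j w) :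
    w = Real.sqrt 18229 / 49 := by
  obtain ⟨x, y, hx, hy, hxy⟩ := hw
  rw [Aper_rotA j 4 (by omega)] at hx
  rw [Aper_rotB j 4 (by omega)] at hy
  have hxval : x = ((116 - 19 : ℝ) + Real.sqrt ((116-19:ℝ)^2 + 4*45*49)) / (2*49) := by
    apply master (rotA 4) x (rotA_pos 4) (rotA_per 4) 116 45 49 19
        (by norm_num) (by norm_num) (by norm_num) ?_ hx
    intro t ht
    rw [show rotA 4 0 = 2 from by decide, show rotA 4 1 = 2 from by decide, show rotA 4 2 = 1 from by decide, show rotA 4 3 = 2 from by decide, show rotA 4 4 = 1 from by decide, show rotA 4 5 = 1 from by decide, show rotA 4 6 = 2 from by decide]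
    push_cast
    have p0 : (0:ℝ) < t := by linarith
    have p1 : (0:ℝ) < 2 + 1/t := by have := one_div_pos.mpr p0; linarith
    have p2 : (0:ℝ) < 1 + 1/(2 + 1/t) := by have := one_div_pos.mpr p1; linarith
    have p3 : (0:ℝ) < 1 + 1/(1 + 1/(2 + 1/t)) := by have := one_div_pos.mpr p2; linarith
    have p4 : (0:ℝ) < 2 + 1/(1 + 1/(1 + 1/(2 + 1/t))) := by have := one_div_pos.mpr p3; linarith
    have p5 : (0:ℝ) < 1 + 1/(2 + 1/(1 + 1/(1 + 1/(2 + 1/t)))) := by have := one_div_pos.mpr p4; linarith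
    have p6 : (0:ℝ) < 2 + 1/(1 + 1/(2 + 1/(1 + 1/(1 + 1/(2 + 1/t))))) := by have := one_div_pos.mpr p5; linarith
    have pd : (0:ℝ) < 49*t + 19 := by linarith
    field_simp
    ring
  have hyval : y = (2*45 : ℝ) / ((116 - 19 : ℝ) + Real.sqrt ((116-19:ℝ)^2 + 4*49*45)) := by
    apply masterY (rotB 4) y (rotB_zero 4) (rotB_pos 4) (rotB_per 4) 116 49 45 19
        (by norm_num) (by norm_num) (by norm_num) ?_ hy
    intro t ht
    rw [show rotB 4 1 = 2 from by decide, show rotB 4 2 = 1 from by decide, show rotB 4 3 = 1 from by decide, show rotB 4 4 = 2 from by decide, show rotB 4 5 = 1 from by decide, show rotB 4 6 = 2 from by decide, show rotB 4 7 = 2 from by decide]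
    push_cast
    have p0 : (0:ℝ) < t := by linarith
    have p1 : (0:ℝ) < 2 + 1/t := by have := one_div_pos.mpr p0; linarith
    have p2 : (0:ℝ) < 2 + 1/(2 + 1/t) := by have := one_div_pos.mpr p1; linarith
    have p3 : (0:ℝ) < 1 + 1/(2 + 1/(2 + 1/t)) := by have := one_div_pos.mpr p2; linarith
    have p4 : (0:ℝ) < 2 + 1/(1 + 1/(2 + 1/(2 + 1/t))) := by have := one_div_pos.mpr p3; linarith
    have p5 : (0:ℝ) < 1 + 1/(2 + 1/(1 + 1/(2 + 1/(2 + 1/t)))) := by have := one_div_pos.mpr p4; linarith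
    have p6 : (0:ℝ) < 1 + 1/(1 + 1/(2 + 1/(1 + 1/(2 + 1/(2 + 1/t))))) := by have := one_div_pos.mpr p5; linarith
    have pd : (0:ℝ) < 45*t + 19 := by linarith
    field_simp
    ring
  rw [hxy, hxval, hyval,
    show ((116-19:ℝ)^2 + 4*45*49) = 18229 by norm_num,
    show ((116-19:ℝ)^2 + 4*49*45) = 18229 by norm_num]
  have hS2 : Real.sqrt 18229 ^ 2 = 18229 := Real.sq_sqrt (by norm_num)
  have hSpos : (0:ℝ) < Real.sqrt 18229 := Real.sqrt_pos.mpr (by norm_num)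
  have hden : (116 - 19 : ℝ) + Real.sqrt 18229 ≠ 0 := by linarith
  field_simp
  nlinarith [hS2]

lemma lamVal5 (j : ℤ) (hc : j % 7 = 5) (w : ℝ) (hw : IsLambda Aper j w) :
    w = Real.sqrt 18229 / 43 := by
  obtain ⟨x, y, hx, hy, hxy⟩ := hw
  rw [Aper_rotA j 5 (by omega)] at hx
  rw [Aper_rotB j 5 (by omega)] at hy
  have hxval : x = ((117 - 18 : ℝ) + Real.sqrt ((117-18:ℝ)^2 + 4*49*43)) / (2*43) := by
    apply master (rotA 5) x (rotA_pos 5) (rotA_per 5) 117 49 43 18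
        (by norm_num) (by norm_num) (by norm_num) ?_ hx
    intro t ht
    rw [show rotA 5 0 = 2 from by decide, show rotA 5 1 = 1 from by decide, show rotA 5 2 = 2 from by decide, show rotA 5 3 = 1 from by decide, show rotA 5 4 = 1 from by decide, show rotA 5 5 = 2 from by decide, show rotA 5 6 = 2 from by decide]
    push_cast
    have p0 : (0:ℝ) < t := by linarith
    have p1 : (0:ℝ) < 2 + 1/t := by have := one_div_pos.mpr p0; linarith
    have p2 : (0:ℝ) < 2 + 1/(2 + 1/t) := by have := one_div_pos.mpr p1; linarith
    have p3 : (0:ℝ) < 1 + 1/(2 + 1/(2 + 1/t)) := by have := one_div_pos.mpr p2; linarith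
    have p4 : (0:ℝ) < 1 + 1/(1 + 1/(2 + 1/(2 + 1/t))) := by have := one_div_pos.mpr p3; linarith
    have p5 : (0:ℝ) < 2 + 1/(1 + 1/(1 + 1/(2 + 1/(2 + 1/t)))) := by have := one_div_pos.mpr p4; linarith
    have p6 : (0:ℝ) < 1 + 1/(2 + 1/(1 + 1/(1 + 1/(2 + 1/(2 + 1/t))))) := by have := one_div_pos.mpr p5; linarith
    have pd : (0:ℝ) < 43*t + 18 := by linarith
    field_simp
    ring
  have hyval : y = (2*49 : ℝ) / ((117 - 18 : ℝ) + Real.sqrt ((117-18:ℝ)^2 + 4*43*49)) := by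
    apply masterY (rotB 5) y (rotB_zero 5) (rotB_pos 5) (rotB_per 5) 117 43 49 18
        (by norm_num) (by norm_num) (by norm_num) ?_ hy
    intro t ht
    rw [show rotB 5 1 = 2 from by decide, show rotB 5 2 = 2 from by decide, show rotB 5 3 = 1 from by decide, show rotB 5 4 = 1 from by decide, show rotB 5 5 = 2 from by decide, show rotB 5 6 = 1 from by decide, show rotB 5 7 = 2 from by decide]
    push_cast
    have p0 : (0:ℝ) < t := by linarith
    have p1 : (0:ℝ) < 2 + 1/t := by have := one_div_pos.mpr p0; linarith
    have p2 : (0:ℝ) < 1 + 1/(2 + 1/t) := by have := one_div_pos.mpr p1; linarith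
    have p3 : (0:ℝ) < 2 + 1/(1 + 1/(2 + 1/t)) := by have := one_div_pos.mpr p2; linarith
    have p4 : (0:ℝ) < 1 + 1/(2 + 1/(1 + 1/(2 + 1/t))) := by have := one_div_pos.mpr p3; linarith
    have p5 : (0:ℝ) < 1 + 1/(1 + 1/(2 + 1/(1 + 1/(2 + 1/t)))) := by have := one_div_pos.mpr p4; linarith
    have p6 : (0:ℝ) < 2 + 1/(1 + 1/(1 + 1/(2 + 1/(1 + 1/(2 + 1/t))))) := by have := one_div_pos.mpr p5; linarith
    have pd : (0:ℝ) < 49*t + 18 := by linarith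
    field_simp
    ring
  rw [hxy, hxval, hyval,
    show ((117-18:ℝ)^2 + 4*49*43) = 18229 by norm_num,
    show ((117-18:ℝ)^2 + 4*43*49) = 18229 by norm_num]
  have hS2 : Real.sqrt 18229 ^ 2 = 18229 := Real.sq_sqrt (by norm_num)
  have hSpos : (0:ℝ) < Real.sqrt 18229 := Real.sqrt_pos.mpr (by norm_num)
  have hden : (117 - 18 : ℝ) + Real.sqrt 18229 ≠ 0 := by linarith
  field_simp
  nlinarith [hS2]

lemma lamVal6 (j : ℤ) (hc : j % 7 = 6) (w : ℝ) (hw : IsLambda Aper j w) :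
    w = Real.sqrt 18229 / 75 := by
  obtain ⟨x, y, hx, hy, hxy⟩ := hw
  rw [Aper_rotA j 6 (by omega)] at hx
  rw [Aper_rotB j 6 (by omega)] at hy
  have hxval : x = ((104 - 31 : ℝ) + Real.sqrt ((104-31:ℝ)^2 + 4*43*75)) / (2*75) := by
    apply master (rotA 6) x (rotA_pos 6) (rotA_per 6) 104 43 75 31
        (by norm_num) (by norm_num) (by norm_num) ?_ hx
    intro t ht
    rw [show rotA 6 0 = 1 from by decide, show rotA 6 1 = 2 from by decide, show rotA 6 2 = 1 from by decide, show rotA 6 3 = 1 from by decide, show rotA 6 4 = 2 from by decide, show rotA 6 5 = 2 from by decide, show rotA 6 6 = 2 from by decide]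
    push_cast
    have p0 : (0:ℝ) < t := by linarith
    have p1 : (0:ℝ) < 2 + 1/t := by have := one_div_pos.mpr p0; linarith
    have p2 : (0:ℝ) < 2 + 1/(2 + 1/t) := by have := one_div_pos.mpr p1; linarith
    have p3 : (0:ℝ) < 2 + 1/(2 + 1/(2 + 1/t)) := by have := one_div_pos.mpr p2; linarith
    have p4 : (0:ℝ) < 1 + 1/(2 + 1/(2 + 1/(2 + 1/t))) := by have := one_div_pos.mpr p3; linarith
    have p5 : (0:ℝ) < 1 + 1/(1 + 1/(2 + 1/(2 + 1/(2 + 1/t)))) := by have := one_div_pos.mpr p4; linarith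
    have p6 : (0:ℝ) < 2 + 1/(1 + 1/(1 + 1/(2 + 1/(2 + 1/(2 + 1/t))))) := by have := one_div_pos.mpr p5; linarith
    have pd : (0:ℝ) < 75*t + 31 := by linarith
    field_simp
    ring
  have hyval : y = (2*43 : ℝ) / ((104 - 31 : ℝ) + Real.sqrt ((104-31:ℝ)^2 + 4*75*43)) := by
    apply masterY (rotB 6) y (rotB_zero 6) (rotB_pos 6) (rotB_per 6) 104 75 43 31
        (by norm_num) (by norm_num) (by norm_num) ?_ hy
    intro t ht
    rw [show rotB 6 1 = 2 from by decide, show rotB 6 2 = 2 from by decide, show rotB 6 3 = 2 from by decide, show rotB 6 4 = 1 from by decide, show rotB 6 5 = 1 from by decide, show rotB 6 6 = 2 from by decide, show rotB 6 7 = 1 from by decide]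
    push_cast
    have p0 : (0:ℝ) < t := by linarith
    have p1 : (0:ℝ) < 1 + 1/t := by have := one_div_pos.mpr p0; linarith
    have p2 : (0:ℝ) < 2 + 1/(1 + 1/t) := by have := one_div_pos.mpr p1; linarith
    have p3 : (0:ℝ) < 1 + 1/(2 + 1/(1 + 1/t)) := by have := one_div_pos.mpr p2; linarith
    have p4 : (0:ℝ) < 1 + 1/(1 + 1/(2 + 1/(1 + 1/t))) := by have := one_div_pos.mpr p3; linarith
    have p5 : (0:ℝ) < 2 + 1/(1 + 1/(1 + 1/(2 + 1/(1 + 1/t)))) := by have := one_div_pos.mpr p4; linarith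
    have p6 : (0:ℝ) < 2 + 1/(2 + 1/(1 + 1/(1 + 1/(2 + 1/(1 + 1/t))))) := by have := one_div_pos.mpr p5; linarith
    have pd : (0:ℝ) < 43*t + 31 := by linarith
    field_simp
    ring
  rw [hxy, hxval, hyval,
    show ((104-31:ℝ)^2 + 4*43*75) = 18229 by norm_num,
    show ((104-31:ℝ)^2 + 4*75*43) = 18229 by norm_num]
  have hS2 : Real.sqrt 18229 ^ 2 = 18229 := Real.sq_sqrt (by norm_num)
  have hSpos : (0:ℝ) < Real.sqrt 18229 := Real.sqrt_pos.mpr (by norm_num)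
  have hden : (104 - 31 : ℝ) + Real.sqrt 18229 ≠ 0 := by linarith
  field_simp
  nlinarith [hS2]

theorem stmt14 (v : ℝ) (hv : IsLambda Aper 0 v) :
    ∀ j : ℤ, ∀ w : ℝ, IsLambda Aper j w → w ≤ v := by
  have hv0 : v = Real.sqrt 18229 / 41 := lamVal0 0 (by decide) v hv
  intro j w hw
  have hSnn : (0:ℝ) ≤ Real.sqrt 18229 := Real.sqrt_nonneg _
  have h7 : j % 7 = 0 ∨ j % 7 = 1 ∨ j % 7 = 2 ∨ j % 7 = 3 ∨ j % 7 = 4 ∨ j % 7 = 5 ∨ j % 7 = 6 := by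
    omega
  rcases h7 with h|h|h|h|h|h|h
  · rw [lamVal0 j h w hw, hv0]
  · rw [lamVal1 j h w hw, hv0]
    rw [div_le_div_iff₀ (by norm_num) (by norm_num)]
    nlinarith [hSnn]
  · rw [lamVal2 j h w hw, hv0]
    rw [div_le_div_iff₀ (by norm_num) (by norm_num)]
    nlinarith [hSnn]
  · rw [lamVal3 j h w hw, hv0]
    rw [div_le_div_iff₀ (by norm_num) (by norm_num)]
    nlinarith [hSnn]
  · rw [lamVal4 j h w hw, hv0]
    rw [div_le_div_iff₀ (by norm_num) (by norm_num)]
    nlinarith [hSnn]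
  · rw [lamVal5 j h w hw, hv0]
    rw [div_le_div_iff₀ (by norm_num) (by norm_num)]
    nlinarith [hSnn]
  · rw [lamVal6 j h w hw, hv0]
    rw [div_le_div_iff₀ (by norm_num) (by norm_num)]
    nlinarith [hSnn]
end

section
/- For any bi-infinite sequence B ∈ {1,2}^ℤ containing the subsequence 2,2,2,1,2,1,1,2,2,2,1,2*,1,1,2,2,2,1,2,1,1,2,2 with the asterisk at position j, one has λ_j(B) < [2;1,1,2,2,2,1,2,1,1,2,2] + [0;1,2,2,2,1,1,2,1,2,2,2] = 12230321/3713986 < α₂ − 3·10^{-8}, where α₂ := [2; \overline{1,1,2,2,2,1,2}] + [0; 1,2,2,2,1,1,2,1,2,2, \overline{1,2,1,1,2,2,2}]. -/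
open Filter Topology

noncomputable def evalWith : List ℕ → ℝ → ℝ
  | [], t => t
  | a :: l, t => (a : ℝ) + 1 / evalWith l t

lemma cfList_append (l l₂ : List ℕ) : cfList (l ++ l₂) = evalWith l (cfList l₂) := by
  induction l with
  | nil => simp [evalWith]
  | cons a l ih => simp [cfList, evalWith, ih]

lemma cfList_ge_one : ∀ {l : List ℕ}, l ≠ [] → (∀ x ∈ l, 1 ≤ x) → (1:ℝ) ≤ cfList l := by
  intro l
  induction l with
  | nil => intro h; exact absurd rfl h
  | cons a l ih =>
    intro _ hpos
    have ha : (1:ℝ) ≤ (a:ℝ) := by exact_mod_cast hpos a (by simp)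
    rcases eq_or_ne l [] with rfl | h
    · simpa [cfList] using ha
    · have h1 := ih h (fun x hx => hpos x (by simp [hx]))
      have h0 : (0:ℝ) < cfList l := lt_of_lt_of_le one_pos h1
      have : (0:ℝ) < 1 / cfList l := by positivity
      simp only [cfList]
      linarith

lemma evalWith_bounds : ∀ (l : List ℕ), l ≠ [] → (∀ x ∈ l, 1 ≤ x) → ∀ t : ℝ, 1 ≤ t →
    (Odd l.length → cfList l < evalWith l t ∧ evalWith l t ≤ cfList (l ++ [1])) ∧
    (Even l.length → cfList (l ++ [1]) ≤ evalWith l t ∧ evalWith l t < cfList l) := by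
  intro l
  induction l with
  | nil => intro h; exact absurd rfl h
  | cons a l ih =>
    intro _ hpos t ht
    have ht0 : (0:ℝ) < t := lt_of_lt_of_le one_pos ht
    rcases eq_or_ne l [] with rfl | h
    · refine ⟨fun _ => ?_, fun he => by simp at he⟩
      have e1 : cfList [a] = (a:ℝ) := by norm_num [cfList]
      have e2 : cfList ([a] ++ [1]) = (a:ℝ) + 1 := by norm_num [cfList]
      have e3 : evalWith [a] t = (a:ℝ) + 1/t := by simp [evalWith]
      have hpt : (0:ℝ) < 1/t := by positivity
      have hle : 1/t ≤ 1 := by rw [div_le_one ht0]; linarith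
      rw [e1, e2, e3]
      constructor <;> linarith
    · have hone : (1:ℝ) ≤ cfList l := cfList_ge_one h (fun x hx => hpos x (by simp [hx]))
      have hone' : (1:ℝ) ≤ cfList (l ++ [1]) := by
        refine cfList_ge_one (by simp) ?_
        intro x hx
        rcases List.mem_append.1 hx with hx | hx
        · exact hpos x (by simp [hx])
        · simp at hx; omega
      have IH := ih h (fun x hx => hpos x (by simp [hx])) t ht
      constructor
      · intro hodd
        have heven : Even l.length := by
          rcases Nat.even_or_odd l.length with he | ho
          · exact he
          · exfalso; rw [Nat.odd_iff] at hodd ho; simp [List.length_cons, Nat.add_mod] at hodd; omega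
        obtain ⟨h1, h2⟩ := IH.2 heven
        have hs0 : (0:ℝ) < evalWith l t := lt_of_lt_of_le one_pos (le_trans hone' h1)
        have hc0 : (0:ℝ) < cfList l := lt_of_lt_of_le one_pos hone
        have hc0' : (0:ℝ) < cfList (l ++ [1]) := lt_of_lt_of_le one_pos hone'
        constructor
        · simp only [cfList, evalWith, cfList_append]
          have : 1 / cfList l < 1 / evalWith l t := by
            apply one_div_lt_one_div_of_lt hs0 h2
          rw [show cfList (l ++ [1]) = evalWith l (cfList [1]) from cfList_append l [1]] at *
          linarith [this]
        · have e1 : cfList ((a :: l) ++ [1]) = (a:ℝ) + 1 / cfList (l ++ [1]) := by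
            simp [cfList]
          rw [e1]
          simp only [evalWith]
          have : 1 / evalWith l t ≤ 1 / cfList (l ++ [1]) :=
            one_div_le_one_div_of_le hc0' h1
          linarith
      · intro heven
        have hodd : Odd l.length := by
          rcases Nat.even_or_odd l.length with he | ho
          · exfalso; rw [Nat.even_iff] at heven he; simp [List.length_cons, Nat.add_mod] at heven; omega
          · exact ho
        obtain ⟨h1, h2⟩ := IH.1 hodd
        have hc0 : (0:ℝ) < cfList l := lt_of_lt_of_le one_pos hone
        have hc0' : (0:ℝ) < cfList (l ++ [1]) := lt_of_lt_of_le one_pos hone'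
        have hs0 : (0:ℝ) < evalWith l t := lt_trans hc0 h1
        constructor
        · have e1 : cfList ((a :: l) ++ [1]) = (a:ℝ) + 1 / cfList (l ++ [1]) := by
            simp [cfList]
          rw [e1]
          simp only [evalWith]
          have : 1 / cfList (l ++ [1]) ≤ 1 / evalWith l t :=
            one_div_le_one_div_of_le hs0 h2
          linarith
        · simp only [cfList, evalWith]
          have : 1 / evalWith l t < 1 / cfList l :=
            one_div_lt_one_div_of_lt hc0 h1
          linarith

example : True := trivial

lemma conv_decomp (a : ℕ → ℕ) (N k : ℕ) :
    cfConvs a (N + k) = evalWith ((List.range N).map a)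
      (cfList ((List.range (k+1)).map (fun i => a (N + i)))) := by
  rw [cfConvs, show N + k + 1 = N + (k+1) by omega, List.range_add, List.map_append,
    cfList_append, List.map_map]
  rfl

lemma mem_map_ge_one {f : ℕ → ℕ} (hf : ∀ n, 1 ≤ f n) {l : List ℕ} :
    ∀ z ∈ l.map f, 1 ≤ z := by
  intro z hz
  obtain ⟨i, _, rfl⟩ := List.mem_map.1 hz
  exact hf i

lemma cflim_bounds {a : ℕ → ℕ} {x : ℝ} (h : CFLim a x) (hpos : ∀ n, 1 ≤ a n)
    (N : ℕ) (hN : N ≠ 0) :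
    (Odd N → cfList ((List.range N).map a) ≤ x ∧ x ≤ cfList ((List.range N).map a ++ [1])) ∧
    (Even N → cfList ((List.range N).map a ++ [1]) ≤ x ∧ x ≤ cfList ((List.range N).map a)) := by
  have hne : (List.range N).map a ≠ [] := by
    simp [List.map_eq_nil_iff, List.range_eq_nil, hN]
  have hmem := mem_map_ge_one hpos (l := List.range N)
  have hlen : ((List.range N).map a).length = N := by simp
  have ht : ∀ k : ℕ, (1:ℝ) ≤ cfList ((List.range (k+1)).map (fun i => a (N + i))) := by
    intro k
    refine cfList_ge_one ?_ (mem_map_ge_one (fun i => hpos (N + i)))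
    simp [List.map_eq_nil_iff, List.range_eq_nil]
  constructor
  · intro hodd
    have key := fun k : ℕ => (evalWith_bounds _ hne hmem _ (ht k)).1 (by rw [hlen]; exact hodd)
    constructor
    · refine ge_of_tendsto h ?_
      filter_upwards [eventually_ge_atTop N] with n hn
      obtain ⟨k, rfl⟩ := Nat.exists_eq_add_of_le hn
      rw [conv_decomp]; exact (key k).1.le
    · refine le_of_tendsto h ?_
      filter_upwards [eventually_ge_atTop N] with n hn
      obtain ⟨k, rfl⟩ := Nat.exists_eq_add_of_le hn
      rw [conv_decomp]; exact (key k).2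
  · intro heven
    have key := fun k : ℕ => (evalWith_bounds _ hne hmem _ (ht k)).2 (by rw [hlen]; exact heven)
    constructor
    · refine ge_of_tendsto h ?_
      filter_upwards [eventually_ge_atTop N] with n hn
      obtain ⟨k, rfl⟩ := Nat.exists_eq_add_of_le hn
      rw [conv_decomp]; exact (key k).1
    · refine le_of_tendsto h ?_
      filter_upwards [eventually_ge_atTop N] with n hn
      obtain ⟨k, rfl⟩ := Nat.exists_eq_add_of_le hn
      rw [conv_decomp]; exact (key k).2.le

lemma conv_decomp0 (b : ℕ → ℕ) (hb0 : b 0 = 0) (N k : ℕ) :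
    cfConvs b (N + k + 1) = 1 / evalWith ((List.range N).map (fun i => b (1 + i)))
      (cfList ((List.range (k+1)).map (fun i => b (1 + (N + i))))) := by
  rw [cfConvs, show N + k + 1 + 1 = 1 + (N + (k+1)) by omega, List.range_add, List.map_append,
    cfList_append, List.map_map, List.range_add, List.map_append, List.map_map, cfList_append]
  simp [evalWith, cfList, hb0, Function.comp_def]

lemma cflim0_bounds {b : ℕ → ℕ} {y : ℝ} (h : CFLim b y) (hb0 : b 0 = 0)
    (hpos : ∀ n, 1 ≤ b (1 + n)) (N : ℕ) (hN : N ≠ 0) :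
    (Odd N → 1 / cfList ((List.range N).map (fun i => b (1 + i)) ++ [1]) ≤ y ∧
      y ≤ 1 / cfList ((List.range N).map (fun i => b (1 + i)))) ∧
    (Even N → 1 / cfList ((List.range N).map (fun i => b (1 + i))) ≤ y ∧
      y ≤ 1 / cfList ((List.range N).map (fun i => b (1 + i)) ++ [1])) := by
  set R := (List.range N).map (fun i => b (1 + i)) with hR
  have hne : R ≠ [] := by
    simp [hR, List.map_eq_nil_iff, List.range_eq_nil, hN]
  have hmem : ∀ z ∈ R, 1 ≤ z := mem_map_ge_one hpos
  have hlen : R.length = N := by simp [hR]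
  have hone : (1:ℝ) ≤ cfList R := cfList_ge_one hne hmem
  have hone' : (1:ℝ) ≤ cfList (R ++ [1]) := by
    refine cfList_ge_one (by simp) ?_
    intro z hz
    rcases List.mem_append.1 hz with hz | hz
    · exact hmem z hz
    · simp at hz; omega
  have hc0 : (0:ℝ) < cfList R := lt_of_lt_of_le one_pos hone
  have hc0' : (0:ℝ) < cfList (R ++ [1]) := lt_of_lt_of_le one_pos hone'
  have ht : ∀ k : ℕ, (1:ℝ) ≤ cfList ((List.range (k+1)).map (fun i => b (1 + (N + i)))) := by
    intro k
    refine cfList_ge_one ?_ (mem_map_ge_one (fun i => hpos (N + i)))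
    simp [List.map_eq_nil_iff, List.range_eq_nil]
  constructor
  · intro hodd
    have key := fun k : ℕ => (evalWith_bounds _ hne hmem _ (ht k)).1 (by rw [hlen]; exact hodd)
    constructor
    · refine ge_of_tendsto h ?_
      filter_upwards [eventually_ge_atTop (N + 1)] with n hn
      obtain ⟨k, rfl⟩ := Nat.exists_eq_add_of_le hn
      rw [show N + 1 + k = N + k + 1 by omega, conv_decomp0 b hb0]
      exact one_div_le_one_div_of_le (lt_trans hc0 (key k).1) (key k).2
    · refine le_of_tendsto h ?_
      filter_upwards [eventually_ge_atTop (N + 1)] with n hn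
      obtain ⟨k, rfl⟩ := Nat.exists_eq_add_of_le hn
      rw [show N + 1 + k = N + k + 1 by omega, conv_decomp0 b hb0]
      exact (one_div_lt_one_div_of_lt hc0 (key k).1).le
  · intro heven
    have key := fun k : ℕ => (evalWith_bounds _ hne hmem _ (ht k)).2 (by rw [hlen]; exact heven)
    constructor
    · refine ge_of_tendsto h ?_
      filter_upwards [eventually_ge_atTop (N + 1)] with n hn
      obtain ⟨k, rfl⟩ := Nat.exists_eq_add_of_le hn
      rw [show N + 1 + k = N + k + 1 by omega, conv_decomp0 b hb0]
      exact (one_div_lt_one_div_of_lt (lt_of_lt_of_le hc0' (key k).1) (key k).2).le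
    · refine le_of_tendsto h ?_
      filter_upwards [eventually_ge_atTop (N + 1)] with n hn
      obtain ⟨k, rfl⟩ := Nat.exists_eq_add_of_le hn
      rw [show N + 1 + k = N + k + 1 by omega, conv_decomp0 b hb0]
      exact one_div_le_one_div_of_le hc0' (key k).1

lemma getD_mod_ge_one (l : List ℕ) (hl : l ≠ []) (h : ∀ z ∈ l, 1 ≤ z) (i : ℕ) :
    1 ≤ l.getD (i % l.length) 0 := by
  have hlen : 0 < l.length := List.length_pos_iff.2 hl
  have hi : i % l.length < l.length := Nat.mod_lt _ hlen
  rw [List.getD_eq_getElem l 0 hi]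
  exact h _ (List.getElem_mem hi)

theorem stmt17 (B : ℤ → ℕ) (hB : ∀ n, B n = 1 ∨ B n = 2) (j : ℤ)
    (hpat : ∀ i : ℕ, i < 23 →
      B (j - 11 + i) = [2,2,2,1,2,1,1,2,2,2,1,2,1,1,2,2,2,1,2,1,1,2,2].getD i 0)
    (v : ℝ) (hv : IsLambda B j v) (x y : ℝ)
    (hx : CFLim (epseq [] [2,1,1,2,2,2,1]) x)
    (hy : CFLim (epseq [0,1,2,2,2,1,1,2,1,2,2] [1,2,1,1,2,2,2]) y) :
    v < cfList [2,1,1,2,2,2,1,2,1,1,2,2] + cfList [0,1,2,2,2,1,1,2,1,2,2,2] ∧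
    cfList [2,1,1,2,2,2,1,2,1,1,2,2] + cfList [0,1,2,2,2,1,1,2,1,2,2,2]
      = 12230321 / 3713986 ∧
    12230321 / 3713986 < (x + y) - 3 / 100000000 := by
  obtain ⟨x', y', hx', hy', rfl⟩ := hv
  have hBpos : ∀ n, 1 ≤ B n := fun n => by rcases hB n with h | h <;> omega
  have key : ∀ (i : ℕ) (z : ℤ) (v : ℕ), i < 23 → j - 11 + i = z →
      [2,2,2,1,2,1,1,2,2,2,1,2,1,1,2,2,2,1,2,1,1,2,2].getD i 0 = v → B z = v := by
    intro i z v hi hz hv; rw [← hz, hpat i hi, hv]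
  -- forward prefix identification
  have hlistf : (List.range 13).map (fun n : ℕ => B (j + n)) = [2,1,1,2,2,2,1,2,1,1,2,2,B (j + 12)] := by
    show [B (j + ((0:ℕ):ℤ)), B (j + ((1:ℕ):ℤ)), B (j + ((2:ℕ):ℤ)), B (j + ((3:ℕ):ℤ)),
      B (j + ((4:ℕ):ℤ)), B (j + ((5:ℕ):ℤ)), B (j + ((6:ℕ):ℤ)), B (j + ((7:ℕ):ℤ)),
      B (j + ((8:ℕ):ℤ)), B (j + ((9:ℕ):ℤ)), B (j + ((10:ℕ):ℤ)), B (j + ((11:ℕ):ℤ)),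
      B (j + ((12:ℕ):ℤ))] = _
    rw [key 11 (j + ((0:ℕ):ℤ)) 2 (by norm_num) (by push_cast; ring) rfl,
        key 12 (j + ((1:ℕ):ℤ)) 1 (by norm_num) (by push_cast; ring) rfl,
        key 13 (j + ((2:ℕ):ℤ)) 1 (by norm_num) (by push_cast; ring) rfl,
        key 14 (j + ((3:ℕ):ℤ)) 2 (by norm_num) (by push_cast; ring) rfl,
        key 15 (j + ((4:ℕ):ℤ)) 2 (by norm_num) (by push_cast; ring) rfl,
        key 16 (j + ((5:ℕ):ℤ)) 2 (by norm_num) (by push_cast; ring) rfl,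
        key 17 (j + ((6:ℕ):ℤ)) 1 (by norm_num) (by push_cast; ring) rfl,
        key 18 (j + ((7:ℕ):ℤ)) 2 (by norm_num) (by push_cast; ring) rfl,
        key 19 (j + ((8:ℕ):ℤ)) 1 (by norm_num) (by push_cast; ring) rfl,
        key 20 (j + ((9:ℕ):ℤ)) 1 (by norm_num) (by push_cast; ring) rfl,
        key 21 (j + ((10:ℕ):ℤ)) 2 (by norm_num) (by push_cast; ring) rfl,
        key 22 (j + ((11:ℕ):ℤ)) 2 (by norm_num) (by push_cast; ring) rfl]
    norm_num
  -- backward prefix identification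
  have hlistb : (List.range 12).map
      (fun i : ℕ => (fun n : ℕ => if n = 0 then 0 else B (j - n)) (1 + i)) =
      [1,2,2,2,1,1,2,1,2,2,2,B (j - 12)] := by
    show [B (j - ((1:ℕ):ℤ)), B (j - ((2:ℕ):ℤ)), B (j - ((3:ℕ):ℤ)), B (j - ((4:ℕ):ℤ)),
      B (j - ((5:ℕ):ℤ)), B (j - ((6:ℕ):ℤ)), B (j - ((7:ℕ):ℤ)), B (j - ((8:ℕ):ℤ)),
      B (j - ((9:ℕ):ℤ)), B (j - ((10:ℕ):ℤ)), B (j - ((11:ℕ):ℤ)), B (j - ((12:ℕ):ℤ))] = _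
    rw [key 10 (j - ((1:ℕ):ℤ)) 1 (by norm_num) (by push_cast; ring) rfl,
        key 9 (j - ((2:ℕ):ℤ)) 2 (by norm_num) (by push_cast; ring) rfl,
        key 8 (j - ((3:ℕ):ℤ)) 2 (by norm_num) (by push_cast; ring) rfl,
        key 7 (j - ((4:ℕ):ℤ)) 2 (by norm_num) (by push_cast; ring) rfl,
        key 6 (j - ((5:ℕ):ℤ)) 1 (by norm_num) (by push_cast; ring) rfl,
        key 5 (j - ((6:ℕ):ℤ)) 1 (by norm_num) (by push_cast; ring) rfl,
        key 4 (j - ((7:ℕ):ℤ)) 2 (by norm_num) (by push_cast; ring) rfl,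
        key 3 (j - ((8:ℕ):ℤ)) 1 (by norm_num) (by push_cast; ring) rfl,
        key 2 (j - ((9:ℕ):ℤ)) 2 (by norm_num) (by push_cast; ring) rfl,
        key 1 (j - ((10:ℕ):ℤ)) 2 (by norm_num) (by push_cast; ring) rfl,
        key 0 (j - ((11:ℕ):ℤ)) 2 (by norm_num) (by push_cast; ring) rfl]
    norm_num
  -- upper bound on x'
  have hposA : ∀ n : ℕ, 1 ≤ (fun n : ℕ => B (j + n)) n := fun n => hBpos _
  have hxu : x' ≤ cfList ([2,1,1,2,2,2,1,2,1,1,2,2,B (j + 12)] ++ [1]) := by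
    have h := ((cflim_bounds hx' hposA 13 (by norm_num)).1 ⟨6, by norm_num⟩).2
    rwa [hlistf] at h
  -- upper bound on y'
  have hposb : ∀ n : ℕ, 1 ≤ (fun n : ℕ => if n = 0 then 0 else B (j - n)) (1 + n) := by
    intro n
    have h : (1 + n : ℕ) ≠ 0 := by omega
    simp only [h, if_false]
    exact hBpos _
  have hyu : y' ≤ 1 / cfList ([1,2,2,2,1,1,2,1,2,2,2,B (j - 12)] ++ [1]) := by
    have h := ((cflim0_bounds hy' rfl hposb 12 (by norm_num)).2 ⟨6, by norm_num⟩).2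
    rwa [hlistb] at h
  refine ⟨?_, ?_, ?_⟩
  · rcases hB (j + 12) with hc | hc <;> rcases hB (j - 12) with hd | hd <;>
      rw [hc] at hxu <;> rw [hd] at hyu <;>
      · norm_num [cfList] at hxu hyu ⊢
        linarith
  · norm_num [cfList]
  · -- lower bounds on x and y
    have hposx : ∀ n, 1 ≤ epseq [] [2,1,1,2,2,2,1] n := by
      intro n
      have h := getD_mod_ge_one [2,1,1,2,2,2,1] (by simp) (by decide) n
      simpa [epseq] using h
    have hposy : ∀ n : ℕ, 1 ≤ epseq [0,1,2,2,2,1,1,2,1,2,2] [1,2,1,1,2,2,2] (1 + n) := by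
      intro n
      simp only [epseq]
      split_ifs with h
      · simp only [List.length_cons, List.length_nil] at h
        have hn : n < 10 := by omega
        interval_cases n <;> decide
      · have h7 : (1 + n - [0,1,2,2,2,1,1,2,1,2,2].length) % [1,2,1,1,2,2,2].length < 7 :=
          Nat.mod_lt _ (by norm_num)
        interval_cases h : (1 + n - [0,1,2,2,2,1,1,2,1,2,2].length) % [1,2,1,1,2,2,2].length <;>
          decide
    have hxl : cfList ((List.range 28).map (epseq [] [2,1,1,2,2,2,1]) ++ [1]) ≤ x :=
      ((cflim_bounds hx hposx 28 (by norm_num)).2 ⟨14, by norm_num⟩).1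
    have hyl : 1 / cfList ((List.range 31).map
        (fun i => epseq [0,1,2,2,2,1,1,2,1,2,2] [1,2,1,1,2,2,2] (1 + i)) ++ [1]) ≤ y :=
      ((cflim0_bounds hy rfl hposy 31 (by norm_num)).1 ⟨15, by norm_num⟩).1
    rw [show (List.range 28).map (epseq [] [2,1,1,2,2,2,1]) =
        [2,1,1,2,2,2,1,2,1,1,2,2,2,1,2,1,1,2,2,2,1,2,1,1,2,2,2,1] by decide] at hxl
    rw [show (List.range 31).map (fun i => epseq [0,1,2,2,2,1,1,2,1,2,2] [1,2,1,1,2,2,2] (1 + i)) =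
        [1,2,2,2,1,1,2,1,2,2,1,2,1,1,2,2,2,1,2,1,1,2,2,2,1,2,1,1,2,2,2] by decide] at hyl
    norm_num [cfList] at hxl hyl
    linarith
end
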